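/- Let a(x) = 1 and b(x) = −γ(1+x)^l on [0,∞), with γ > 0 and l ∈ ℝ. (i) If l < 0, then λ₀(b,a) = 0. (ii) If l ≥ 0, then there exist constants c_l, C_l > 0, depending only on l, such that c_l·γ² ≤ λ₀(b,a) ≤ C_l·γ² for all γ > 1, and c_l·γ^{2/(l+1)} ≤ λ₀(b,a) ≤ C_l·γ^{2/(l+1)} for all 0 < γ ≤ 1. -/

import Mathlib

open MeasureTheory Set Filter
open scoped ENNReal

/-- `B(x) = ∫₀ˣ (b/a)(y) dy`. -/
noncomputable def Bfun (a b : ℝ → ℝ) (x : ℝ) : ℝ := ∫ y in (0:ℝ)..x, b y / a y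

/-- Variational bottom of the spectrum of `H_D` on `(0,∞)` with Dirichlet condition at `0`. -/
noncomputable def lam0 (a b : ℝ → ℝ) : ℝ≥0∞ :=
  ⨅ f ∈ {f : ℝ → ℝ |
      ContDiff ℝ 1 f ∧ HasCompactSupport f ∧ tsupport f ⊆ Ioi (0:ℝ) ∧ f ≠ 0},
    ENNReal.ofReal
      ((2⁻¹ * ∫ x in Ioi (0:ℝ), a x * (deriv f x) ^ 2 * Real.exp (2 * Bfun a b x)) /
        ∫ x in Ioi (0:ℝ), (f x) ^ 2 * Real.exp (2 * Bfun a b x))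

noncomputable def bb (l γ : ℝ) : ℝ → ℝ := fun x => -(γ * (1 + x) ^ l)

noncomputable def BB (l γ : ℝ) (x : ℝ) : ℝ := ∫ y in (0:ℝ)..x, bb l γ y

noncomputable def Wt (l γ : ℝ) (x : ℝ) : ℝ := Real.exp (2 * BB l γ x)

lemma Bfun_eq (l γ : ℝ) : Bfun (fun _ => 1) (bb l γ) = BB l γ := by
  funext x; simp [Bfun, BB]

lemma Wt_pos (l γ x : ℝ) : 0 < Wt l γ x := Real.exp_pos _

lemma bb_contAt (l γ : ℝ) {x : ℝ} (hx : -1 < x) : ContinuousAt (bb l γ) x := by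
  have h1 : ContinuousAt (fun x : ℝ => 1 + x) x := by fun_prop
  have h2 : ContinuousAt (fun y : ℝ => y ^ l) (1 + x) :=
    Real.continuousAt_rpow_const _ _ (Or.inl (by linarith))
  exact ((h2.comp h1).const_mul γ).neg

lemma bb_contOn (l γ : ℝ) {s : Set ℝ} (hs : s ⊆ Ioi (-1 : ℝ)) :
    ContinuousOn (bb l γ) s := fun x hx => (bb_contAt l γ (hs hx)).continuousWithinAt

lemma bb_intInt (l γ : ℝ) {u v : ℝ} (hu : -1 < u) (hv : -1 < v) :
    IntervalIntegrable (bb l γ) volume u v := by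
  apply (bb_contOn l γ (s := uIcc u v) ?_).intervalIntegrable
  intro x hx
  rcases le_total u v with h | h
  · rw [uIcc_of_le h] at hx; exact lt_of_lt_of_le hu hx.1
  · rw [uIcc_of_ge h] at hx; exact lt_of_lt_of_le hv hx.1

lemma BB_hasDerivAt (l γ : ℝ) {x : ℝ} (hx : -1 < x) :
    HasDerivAt (BB l γ) (bb l γ x) x := by
  refine intervalIntegral.integral_hasDerivAt_right (bb_intInt l γ (by norm_num) hx) ?_
    (bb_contAt l γ hx)
  exact ContinuousAt.stronglyMeasurableAtFilter isOpen_Ioi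
    (fun y hy => bb_contAt l γ hy) x hx

lemma BB_contAt (l γ : ℝ) {x : ℝ} (hx : -1 < x) : ContinuousAt (BB l γ) x :=
  (BB_hasDerivAt l γ hx).continuousAt

lemma BB_zero (l γ : ℝ) : BB l γ 0 = 0 := by simp [BB]

lemma bb_nonpos (l γ : ℝ) (hγ : 0 < γ) {x : ℝ} (hx : -1 < x) : bb l γ x ≤ 0 := by
  have : (0:ℝ) < (1 + x) ^ l := Real.rpow_pos_of_pos (by linarith) l
  simp only [bb, neg_nonpos]
  positivity

lemma BB_sub (l γ : ℝ) {x y : ℝ} (hx : -1 < x) (hy : -1 < y) :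
    BB l γ y - BB l γ x = ∫ t in x..y, bb l γ t := by
  have h := intervalIntegral.integral_add_adjacent_intervals (μ := volume)
    (f := bb l γ) (a := (0:ℝ)) (b := x) (c := y)
    (bb_intInt l γ (by norm_num) hx) (bb_intInt l γ hx hy)
  unfold BB; linarith

lemma BB_anti (l γ : ℝ) (hγ : 0 < γ) {x y : ℝ} (hx : -1 < x) (hxy : x ≤ y) :
    BB l γ y ≤ BB l γ x := by
  have hy : -1 < y := lt_of_lt_of_le hx hxy
  have h := BB_sub l γ hx hy
  have hnp : (∫ t in x..y, bb l γ t) ≤ ∫ t in x..y, (0:ℝ) := by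
    apply intervalIntegral.integral_mono_on hxy (bb_intInt l γ hx hy)
      intervalIntegrable_const
    intro u hu
    exact bb_nonpos l γ hγ (lt_of_lt_of_le hx hu.1)
  simp only [intervalIntegral.integral_zero] at hnp
  linarith

lemma BB_nonpos (l γ : ℝ) (hγ : 0 < γ) {x : ℝ} (hx : 0 ≤ x) : BB l γ x ≤ 0 := by
  have := BB_anti l γ hγ (x := 0) (by norm_num) hx
  simpa [BB_zero] using this

lemma Wt_anti (l γ : ℝ) (hγ : 0 < γ) {x y : ℝ} (hx : -1 < x) (hxy : x ≤ y) :
    Wt l γ y ≤ Wt l γ x :=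
  Real.exp_le_exp.2 (by linarith [BB_anti l γ hγ hx hxy])

/-- Bound on the oscillation of `BB` over `[s, s+L]`. -/
lemma BB_osc (l γ : ℝ) (hγ : 0 < γ) {s L M : ℝ} (hs : 0 < s) (hL : 0 < L)
    (hM : ∀ y ∈ Icc s (s + L), (1 + y) ^ l ≤ M) {x : ℝ} (hx : x ∈ Icc s (s + L)) :
    BB l γ s - BB l γ x ≤ γ * L * M := by
  have hs1 : (-1:ℝ) < s := by linarith
  have hx1 : (-1:ℝ) < x := by linarith [hx.1]
  have h := BB_sub l γ hs1 hx1
  have hMpos : 0 ≤ M := le_trans (Real.rpow_nonneg (by linarith : (0:ℝ) ≤ 1 + s) l)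
    (hM s ⟨le_rfl, by linarith⟩)
  have hb : (∫ t in s..x, (fun t => -(bb l γ t)) t) ≤ ∫ t in s..x, (fun _ => γ * M) t := by
    apply intervalIntegral.integral_mono_on hx.1
      ((bb_intInt l γ hs1 hx1).neg) intervalIntegrable_const
    intro t ht
    have hMt : (1 + t) ^ l ≤ M := hM t ⟨le_trans ht.1 le_rfl, le_trans ht.2 hx.2⟩
    show -(bb l γ t) ≤ γ * M
    have hbbt : -(bb l γ t) = γ * (1 + t) ^ l := by simp [bb]
    rw [hbbt]
    exact mul_le_mul_of_nonneg_left hMt hγ.le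
  simp only [intervalIntegral.integral_neg, intervalIntegral.integral_const,
    smul_eq_mul] at hb
  have hxs : x - s ≤ L := by linarith [hx.2]
  have h2 : (x - s) * (γ * M) ≤ L * (γ * M) :=
    mul_le_mul_of_nonneg_right hxs (by positivity)
  nlinarith


lemma contAt_Wt (l γ : ℝ) {x : ℝ} (hx : -1 < x) : ContinuousAt (Wt l γ) x := by
  have h1 : ContinuousAt (fun x => 2 * BB l γ x) x := (BB_contAt l γ hx).const_mul 2
  exact (Real.continuous_exp.continuousAt).comp h1

lemma contAt_rpow1 (l : ℝ) {x : ℝ} (hx : -1 < x) :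
    ContinuousAt (fun x : ℝ => (1 + x) ^ l) x := by
  have h1 : ContinuousAt (fun x : ℝ => 1 + x) x := by fun_prop
  exact (Real.continuousAt_rpow_const _ _ (Or.inl (by linarith))).comp h1

lemma cont_of_van (h : ℝ → ℝ) (K : Set ℝ) (hcl : IsClosed K) (hK0 : K ⊆ Ioi 0)
    (hcont : ∀ x : ℝ, -1 < x → ContinuousAt h x)
    (hvan : ∀ x, x ∉ K → h x = 0) : Continuous h := by
  rw [continuous_iff_continuousAt]
  intro x
  by_cases hx : -1 < x
  · exact hcont x hx
  · have hxK : x ∉ K := fun hmem => hx (by have := hK0 hmem; simp only [mem_Ioi] at this; linarith)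
    have hev : h =ᶠ[nhds x] fun _ => 0 :=
      Filter.eventually_of_mem (hcl.isOpen_compl.mem_nhds hxK) (fun y hy => hvan y hy)
    exact ContinuousAt.congr continuousAt_const hev.symm

lemma integrable_of_van (h : ℝ → ℝ) (K : Set ℝ) (hK : IsCompact K)
    (hK0 : K ⊆ Ioi 0) (hcont : ∀ x : ℝ, -1 < x → ContinuousAt h x)
    (hvan : ∀ x, x ∉ K → h x = 0) : Integrable h := by
  have hc := cont_of_van h K hK.isClosed hK0 hcont hvan
  have hcs : HasCompactSupport h := HasCompactSupport.intro hK hvan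
  exact hc.integrable_of_hasCompactSupport hcs

lemma integrable_shape (g q : ℝ → ℝ) (K : Set ℝ) (hK : IsCompact K) (hK0 : K ⊆ Ioi 0)
    (hg : Continuous g) (hgvan : ∀ x, x ∉ K → g x = 0)
    (hq : ∀ x : ℝ, -1 < x → ContinuousAt q x) :
    Integrable (fun x => g x * q x) := by
  apply integrable_of_van _ K hK hK0
  · intro x hx
    exact (hg.continuousAt).mul (hq x hx)
  · intro x hx
    simp [hgvan x hx]


noncomputable def Dint (l γ : ℝ) (f : ℝ → ℝ) : ℝ :=
  ∫ x in Ioi (0:ℝ), (f x) ^ 2 * Wt l γ x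

noncomputable def Nint (l γ : ℝ) (f : ℝ → ℝ) : ℝ :=
  ∫ x in Ioi (0:ℝ), (deriv f x) ^ 2 * Wt l γ x

noncomputable def Pint (l γ : ℝ) (f : ℝ → ℝ) : ℝ :=
  ∫ x in Ioi (0:ℝ), (f x) ^ 2 * (1 + x) ^ l * Wt l γ x

section TestFun

variable {l γ : ℝ} {f : ℝ → ℝ}

lemma fvan (hts : tsupport f ⊆ Ioi 0) {x : ℝ} (hx : x ∉ tsupport f) : f x = 0 :=
  image_eq_zero_of_notMem_tsupport hx

lemma derivvan {x : ℝ} (hx : x ∉ tsupport f) : deriv f x = 0 := by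
  by_contra h
  exact hx (support_deriv_subset (by simpa [Function.mem_support] using h))

lemma integrable_D (hf : ContDiff ℝ 1 f) (hcs : HasCompactSupport f)
    (hts : tsupport f ⊆ Ioi 0) : Integrable (fun x => (f x) ^ 2 * Wt l γ x) := by
  apply integrable_of_van _ (tsupport f) hcs hts
  · intro x hx
    exact (hf.continuous.continuousAt.pow 2).mul (contAt_Wt l γ hx)
  · intro x hx
    simp [image_eq_zero_of_notMem_tsupport hx]

lemma integrable_N (hf : ContDiff ℝ 1 f) (hcs : HasCompactSupport f)
    (hts : tsupport f ⊆ Ioi 0) : Integrable (fun x => (deriv f x) ^ 2 * Wt l γ x) := by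
  apply integrable_of_van _ (tsupport f) hcs hts
  · intro x hx
    exact ((hf.continuous_deriv le_rfl).continuousAt.pow 2).mul (contAt_Wt l γ hx)
  · intro x hx
    simp [derivvan hx]

lemma integrable_P (hf : ContDiff ℝ 1 f) (hcs : HasCompactSupport f)
    (hts : tsupport f ⊆ Ioi 0) :
    Integrable (fun x => (f x) ^ 2 * (1 + x) ^ l * Wt l γ x) := by
  apply integrable_of_van _ (tsupport f) hcs hts
  · intro x hx
    exact ((hf.continuous.continuousAt.pow 2).mul (contAt_rpow1 l hx)).mul (contAt_Wt l γ hx)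
  · intro x hx
    simp [image_eq_zero_of_notMem_tsupport hx]

lemma integrable_FF (hf : ContDiff ℝ 1 f) (hcs : HasCompactSupport f)
    (hts : tsupport f ⊆ Ioi 0) :
    Integrable (fun x => f x * deriv f x * Wt l γ x) := by
  apply integrable_of_van _ (tsupport f) hcs hts
  · intro x hx
    exact (hf.continuous.continuousAt.mul
      (hf.continuous_deriv le_rfl).continuousAt).mul (contAt_Wt l γ hx)
  · intro x hx
    simp [image_eq_zero_of_notMem_tsupport hx]

lemma setInt_eq_int (h : ℝ → ℝ) (hts : tsupport f ⊆ Ioi 0)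
    (hvan : ∀ x, x ∉ tsupport f → h x = 0) :
    ∫ x in Ioi (0:ℝ), h x = ∫ x, h x := by
  apply setIntegral_eq_integral_of_forall_compl_eq_zero
  intro x hx
  exact hvan x (fun hmem => hx (hts hmem))

lemma Dint_nonneg : 0 ≤ Dint l γ f :=
  setIntegral_nonneg measurableSet_Ioi
    (fun x _ => mul_nonneg (sq_nonneg _) (Wt_pos l γ x).le)

lemma Nint_nonneg : 0 ≤ Nint l γ f :=
  setIntegral_nonneg measurableSet_Ioi
    (fun x _ => mul_nonneg (sq_nonneg _) (Wt_pos l γ x).le)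

lemma Pint_nonneg : 0 ≤ Pint l γ f :=
  setIntegral_nonneg measurableSet_Ioi
    (fun x hx => mul_nonneg (mul_nonneg (sq_nonneg _)
      (Real.rpow_nonneg (by simp only [mem_Ioi] at hx; linarith) l)) (Wt_pos l γ x).le)

lemma Dint_pos (hf : ContDiff ℝ 1 f) (hcs : HasCompactSupport f)
    (hts : tsupport f ⊆ Ioi 0) (hne : f ≠ 0) : 0 < Dint l γ f := by
  rw [Dint, setIntegral_pos_iff_support_of_nonneg_ae
    (ae_of_all _ (fun x => by
      simpa using mul_nonneg (sq_nonneg (f x)) (Wt_pos l γ x).le))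
    ((integrable_D hf hcs hts).integrableOn)]
  have hsub : Function.support f ⊆ Function.support (fun x => (f x) ^ 2 * Wt l γ x) ∩ Ioi 0 := by
    intro x hx
    refine ⟨?_, hts (subset_tsupport f hx)⟩
    have hfx : f x ≠ 0 := hx
    simp only [Function.mem_support]
    exact mul_ne_zero (pow_ne_zero 2 hfx) (Wt_pos l γ x).ne'
  obtain ⟨x, hx⟩ := Function.ne_iff.mp hne
  calc (0:ℝ≥0∞) < volume (Function.support f) :=
        (hf.continuous.isOpen_support).measure_pos volume ⟨x, hx⟩
    _ ≤ _ := measure_mono hsub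
  
end TestFun


section IBP

variable {l γ : ℝ} {f : ℝ → ℝ}

lemma integrable_bbP (l γ : ℝ) (hf : ContDiff ℝ 1 f) (hcs : HasCompactSupport f)
    (hts : tsupport f ⊆ Ioi 0) :
    Integrable (fun x => bb l γ x * (f x) ^ 2 * Wt l γ x) := by
  apply integrable_of_van _ (tsupport f) hcs hts
  · intro x hx
    exact ((bb_contAt l γ hx).mul (hf.continuous.continuousAt.pow 2)).mul (contAt_Wt l γ hx)
  · intro x hx
    simp [image_eq_zero_of_notMem_tsupport hx]

lemma ibp (l γ : ℝ) (hf : ContDiff ℝ 1 f) (hcs : HasCompactSupport f)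
    (hts : tsupport f ⊆ Ioi 0) (hne : f ≠ 0) :
    ∫ x in Ioi (0:ℝ), f x * deriv f x * Wt l γ x = γ * Pint l γ f := by
  set g : ℝ → ℝ := fun x => (f x) ^ 2 * Wt l γ x with hg
  set G : ℝ → ℝ := fun x =>
    2 * (f x * deriv f x * Wt l γ x) + 2 * (bb l γ x * (f x) ^ 2 * Wt l γ x) with hG
  have hvanG : ∀ x, x ∉ tsupport f → G x = 0 := by
    intro x hx
    simp [hG, image_eq_zero_of_notMem_tsupport hx]
  -- every point: hasDerivAt
  have hd : ∀ x : ℝ, HasDerivAt g (G x) x := by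
    intro x
    by_cases hx : (-1:ℝ) < x
    · have hfd : HasDerivAt f (deriv f x) x :=
        ((hf.differentiable one_ne_zero) x).hasDerivAt
      have hBd := BB_hasDerivAt l γ hx
      have hWd : HasDerivAt (Wt l γ) (2 * bb l γ x * Wt l γ x) x := by
        have h2B : HasDerivAt (fun y => 2 * BB l γ y) (2 * bb l γ x) x := hBd.const_mul 2
        have h3 := h2B.exp
        have h4 : 2 * bb l γ x * Wt l γ x = Real.exp (2 * BB l γ x) * (2 * bb l γ x) := by
          simp only [Wt]; ring
        rw [h4]
        exact h3
      have hf2 : HasDerivAt (fun y => (f y) ^ 2) (2 * f x * deriv f x) x := by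
        have h := hfd.fun_pow 2
        have e : (2 * f x * deriv f x) = ((2:ℕ):ℝ) * f x ^ (2 - 1) * deriv f x := by norm_num
        rw [e]; exact h
      have := hf2.mul hWd
      have e : G x = 2 * f x * deriv f x * Wt l γ x + f x ^ 2 * (2 * bb l γ x * Wt l γ x) := by
        show 2 * (f x * deriv f x * Wt l γ x) + 2 * (bb l γ x * f x ^ 2 * Wt l γ x) = _
        ring
      rw [e]; exact this
    · have hxK : x ∉ tsupport f := fun h => by
        have := hts h; simp only [mem_Ioi] at this; exact hx (by linarith)
      have hev : f =ᶠ[nhds x] fun _ => 0 :=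
        Filter.eventually_of_mem ((isClosed_tsupport f).isOpen_compl.mem_nhds hxK)
          (fun y hy => image_eq_zero_of_notMem_tsupport hy)
      have hgev : (fun _ => (0:ℝ)) =ᶠ[nhds x] g := by
        filter_upwards [hev] with y hy
        simp [hg, hy]
      have hG0 : G x = 0 := hvanG x hxK
      rw [hG0]
      exact (hasDerivAt_const x (0:ℝ)).congr_of_eventuallyEq hgev.symm
  -- continuity of G
  have hGc : Continuous G := by
    apply cont_of_van G (tsupport f) (isClosed_tsupport f) hts _ hvanG
    intro x hx
    exact ((hf.continuous.continuousAt.mul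
        (hf.continuous_deriv le_rfl).continuousAt).mul (contAt_Wt l γ hx)).const_mul 2 |>.add
      ((((bb_contAt l γ hx).mul (hf.continuous.continuousAt.pow 2)).mul
        (contAt_Wt l γ hx)).const_mul 2)
  -- endpoints
  have hKne : (tsupport f).Nonempty := by
    rcases eq_empty_or_nonempty (tsupport f) with h | h
    · exfalso
      apply hne
      funext x
      exact image_eq_zero_of_notMem_tsupport (by simp [h])
    · exact h
  set s := sInf (tsupport f) with hs
  set t := sSup (tsupport f) with ht
  have hsK : s ∈ tsupport f := hcs.isCompact.sInf_mem hKne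
  have htK : t ∈ tsupport f := hcs.isCompact.sSup_mem hKne
  have hspos : 0 < s := hts hsK
  have htpos : 0 < t := hts htK
  have hKicc : tsupport f ⊆ Icc s t := fun x hx =>
    ⟨csInf_le hcs.isCompact.bddBelow hx, le_csSup hcs.isCompact.bddAbove hx⟩
  have hst : s ≤ t := (hKicc hsK).2
  set u := s / 2 with hu
  set v := t + 1 with hv
  have huv : u < v := by simp only [hu, hv]; linarith
  have huK : u ∉ tsupport f := fun h => by
    have := (hKicc h).1; simp only [hu] at this; linarith
  have hvK : v ∉ tsupport f := fun h => by
    have := (hKicc h).2; simp only [hv] at this; linarith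
  have hKuv : tsupport f ⊆ Ioc u v := fun x hx =>
    ⟨by have := (hKicc hx).1; simp only [hu]; linarith,
     by have := (hKicc hx).2; simp only [hv]; linarith⟩
  -- interval FTC
  have hGint : IntervalIntegrable G volume u v := hGc.intervalIntegrable u v
  have key : ∫ x in u..v, G x = g v - g u :=
    intervalIntegral.integral_eq_sub_of_hasDerivAt (fun x _ => hd x) hGint
  have hgv : g v = 0 := by simp [hg, image_eq_zero_of_notMem_tsupport hvK]
  have hgu : g u = 0 := by simp [hg, image_eq_zero_of_notMem_tsupport huK]
  have hint0 : ∫ x in u..v, G x = 0 := by rw [key, hgv, hgu]; ring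
  -- transfer to Ioi 0
  have e1 : ∫ x in Ioi (0:ℝ), G x = ∫ x, G x := setInt_eq_int G hts hvanG
  have e2 : ∫ x in Ioc u v, G x = ∫ x, G x := by
    apply setIntegral_eq_integral_of_forall_compl_eq_zero
    intro x hx
    exact hvanG x (fun hmem => hx (hKuv hmem))
  have e3 : ∫ x in u..v, G x = ∫ x in Ioc u v, G x :=
    intervalIntegral.integral_of_le huv.le
  have hGIoi : ∫ x in Ioi (0:ℝ), G x = 0 := by rw [e1, ← e2, ← e3, hint0]
  -- split
  have hA := integrable_FF (l := l) (γ := γ) hf hcs hts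
  have hB := integrable_bbP l γ hf hcs hts
  have hsplit : ∫ x in Ioi (0:ℝ), G x =
      2 * (∫ x in Ioi (0:ℝ), f x * deriv f x * Wt l γ x) +
      2 * (∫ x in Ioi (0:ℝ), bb l γ x * (f x) ^ 2 * Wt l γ x) := by
    rw [hG]
    rw [integral_add ((hA.const_mul 2).integrableOn) ((hB.const_mul 2).integrableOn)]
    rw [integral_const_mul, integral_const_mul]
  have hBP : ∫ x in Ioi (0:ℝ), bb l γ x * (f x) ^ 2 * Wt l γ x = -(γ * Pint l γ f) := by
    have hcong : ∀ x : ℝ, bb l γ x * (f x) ^ 2 * Wt l γ x =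
        -γ * ((f x) ^ 2 * (1 + x) ^ l * Wt l γ x) := by
      intro x; simp only [bb]; ring
    calc ∫ x in Ioi (0:ℝ), bb l γ x * (f x) ^ 2 * Wt l γ x
        = ∫ x in Ioi (0:ℝ), -γ * ((f x) ^ 2 * (1 + x) ^ l * Wt l γ x) := by
          exact integral_congr_ae (ae_of_all _ (fun x => hcong x))
      _ = -γ * Pint l γ f := by rw [integral_const_mul]; rfl
      _ = -(γ * Pint l γ f) := by ring
  rw [hsplit, hBP] at hGIoi
  linarith

end IBP


section Lower

variable {l γ : ℝ} {f : ℝ → ℝ}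

lemma epsCS (l γ : ℝ) (hf : ContDiff ℝ 1 f) (hcs : HasCompactSupport f)
    (hts : tsupport f ⊆ Ioi 0) {ε : ℝ} (hε : 0 < ε) :
    ∫ x in Ioi (0:ℝ), f x * deriv f x * Wt l γ x ≤
      (ε * Dint l γ f + ε⁻¹ * Nint l γ f) / 2 := by
  have hD := integrable_D (l := l) (γ := γ) hf hcs hts
  have hN := integrable_N (l := l) (γ := γ) hf hcs hts
  have hFF := integrable_FF (l := l) (γ := γ) hf hcs hts
  have hmono : ∀ x ∈ Ioi (0:ℝ), f x * deriv f x * Wt l γ x ≤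
      (ε * ((f x) ^ 2 * Wt l γ x) + ε⁻¹ * ((deriv f x) ^ 2 * Wt l γ x)) / 2 := by
    intro x _
    have hW := (Wt_pos l γ x).le
    have key : 2 * (f x * deriv f x) ≤ ε * (f x) ^ 2 + ε⁻¹ * (deriv f x) ^ 2 := by
      nlinarith [sq_nonneg (ε * f x - deriv f x), mul_inv_cancel₀ (ne_of_gt hε), hε,
        sq_nonneg (f x), sq_nonneg (deriv f x), mul_pos hε hε]
    nlinarith [mul_le_mul_of_nonneg_right key hW]
  have hRint : Integrable (fun x =>
      (ε * ((f x) ^ 2 * Wt l γ x) + ε⁻¹ * ((deriv f x) ^ 2 * Wt l γ x)) / 2) :=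
    ((hD.const_mul ε).add (hN.const_mul ε⁻¹)).div_const 2
  calc ∫ x in Ioi (0:ℝ), f x * deriv f x * Wt l γ x
      ≤ ∫ x in Ioi (0:ℝ),
          (ε * ((f x) ^ 2 * Wt l γ x) + ε⁻¹ * ((deriv f x) ^ 2 * Wt l γ x)) / 2 :=
        setIntegral_mono_on hFF.integrableOn hRint.integrableOn measurableSet_Ioi hmono
    _ = (ε * Dint l γ f + ε⁻¹ * Nint l γ f) / 2 := by
        rw [integral_div, integral_add ((hD.const_mul ε).integrableOn)
          ((hN.const_mul ε⁻¹).integrableOn), integral_const_mul, integral_const_mul]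
        rfl

lemma Dint_le_Pint (hl : 0 ≤ l) (hf : ContDiff ℝ 1 f) (hcs : HasCompactSupport f)
    (hts : tsupport f ⊆ Ioi 0) : Dint l γ f ≤ Pint l γ f := by
  apply setIntegral_mono_on (integrable_D hf hcs hts).integrableOn
    (integrable_P hf hcs hts).integrableOn measurableSet_Ioi
  intro x hx
  simp only [mem_Ioi] at hx
  have h1 : (1:ℝ) ≤ (1 + x) ^ l := Real.one_le_rpow (by linarith) hl
  have hW := (Wt_pos l γ x).le
  nlinarith [mul_le_mul_of_nonneg_right (mul_le_mul_of_nonneg_left h1 (sq_nonneg (f x))) hW]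

/-- Lower bound `γ² D ≤ N` valid for all `γ > 0`, `l ≥ 0`. -/
lemma lower_large (hl : 0 ≤ l) (hγ : 0 < γ) (hf : ContDiff ℝ 1 f)
    (hcs : HasCompactSupport f) (hts : tsupport f ⊆ Ioi 0) (hne : f ≠ 0) :
    γ ^ 2 * Dint l γ f ≤ Nint l γ f := by
  have h1 := ibp l γ hf hcs hts hne
  have h2 := epsCS l γ hf hcs hts hγ
  have h3 := Dint_le_Pint (γ := γ) hl hf hcs hts
  have h4 : γ * Dint l γ f ≤ γ * Pint l γ f := mul_le_mul_of_nonneg_left h3 hγ.le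
  rw [← h1] at h4
  have h5 : γ * Dint l γ f ≤ (γ * Dint l γ f + γ⁻¹ * Nint l γ f) / 2 := le_trans h4 h2
  have h6 : γ * Dint l γ f ≤ γ⁻¹ * Nint l γ f := by linarith
  have h7 := mul_le_mul_of_nonneg_left h6 hγ.le
  have h8 : γ * (γ⁻¹ * Nint l γ f) = Nint l γ f := by
    field_simp
  nlinarith

end Lower


lemma cs_aux (g : ℝ → ℝ) {x : ℝ} (hx : 0 < x) (hg : Continuous g) :
    (∫ y in (0:ℝ)..x, g y) ^ 2 ≤ x * ∫ y in (0:ℝ)..x, (g y) ^ 2 := by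
  rw [intervalIntegral.integral_of_le hx.le, intervalIntegral.integral_of_le hx.le]
  set I := ∫ y in Ioc (0:ℝ) x, g y with hI
  set J := ∫ y in Ioc (0:ℝ) x, (g y) ^ 2 with hJ
  have hgi : IntegrableOn g (Ioc 0 x) := hg.integrableOn_Ioc
  have hg2i : IntegrableOn (fun y => (g y) ^ 2) (Ioc 0 x) := (hg.pow 2).integrableOn_Ioc
  have hvol : volume.real (Ioc (0:ℝ) x) = x := by
    rw [measureReal_def, Real.volume_Ioc, sub_zero, ENNReal.toReal_ofReal hx.le]
  have h0 : 0 ≤ ∫ y in Ioc (0:ℝ) x, (g y - I / x) ^ 2 :=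
    setIntegral_nonneg measurableSet_Ioc fun y _ => sq_nonneg _
  have hexp : (∫ y in Ioc (0:ℝ) x, (g y - I / x) ^ 2)
      = (J - (2 * (I / x)) * I) + (I / x) ^ 2 * x := by
    have e : (fun y => (g y - I / x) ^ 2)
        = fun y => ((g y) ^ 2 - (2 * (I / x)) * g y) + (I / x) ^ 2 := by
      funext y; ring
    have hsubint : IntegrableOn (fun y => (g y) ^ 2 - (2 * (I / x)) * g y) (Ioc 0 x) :=
      hg2i.sub (hgi.const_mul _)
    have hconst : IntegrableOn (fun _ : ℝ => (I / x) ^ 2) (Ioc 0 x) :=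
      integrableOn_const measure_Ioc_lt_top.ne
    rw [e, integral_add hsubint hconst,
      integral_sub hg2i (hgi.const_mul _), integral_const_mul, setIntegral_const,
      hvol, smul_eq_mul]
    rw [← hI, ← hJ]
    ring
  have e2 : (J - (2 * (I / x)) * I) + (I / x) ^ 2 * x = J - I ^ 2 / x := by
    field_simp
    ring
  rw [hexp, e2] at h0
  have h2 : I ^ 2 / x ≤ J := by linarith
  rw [div_le_iff₀ hx] at h2
  nlinarith

section Hardy

variable {l γ : ℝ} {f : ℝ → ℝ}

lemma contOn_Wt (l γ : ℝ) {s : Set ℝ} (hs : s ⊆ Ioi (-1:ℝ)) : ContinuousOn (Wt l γ) s :=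
  fun x hx => (contAt_Wt l γ (hs hx)).continuousWithinAt

lemma hardy_ptwise (hγ : 0 < γ) (hf : ContDiff ℝ 1 f) (hcs : HasCompactSupport f)
    (hts : tsupport f ⊆ Ioi 0) {x : ℝ} (hx : 0 < x) :
    (f x) ^ 2 * Wt l γ x ≤ x * Nint l γ f := by
  have hderc : Continuous (deriv f) := hf.continuous_deriv le_rfl
  have hf0 : f 0 = 0 :=
    image_eq_zero_of_notMem_tsupport (fun h => by simpa using hts h)
  have hftc : ∫ y in (0:ℝ)..x, deriv f y = f x := by
    rw [intervalIntegral.integral_deriv_eq_sub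
      (fun y _ => (hf.differentiable one_ne_zero) y) (hderc.intervalIntegrable 0 x)]
    rw [hf0, sub_zero]
  have hcs2 := cs_aux (deriv f) hx hderc
  rw [hftc] at hcs2
  -- weight comparison on [0, x]
  have hWx := Wt_pos l γ x
  have h2 : (∫ y in (0:ℝ)..x, (deriv f y) ^ 2) ≤
      ∫ y in (0:ℝ)..x, (deriv f y) ^ 2 * Wt l γ y * (Wt l γ x)⁻¹ := by
    have hWcont : ContinuousOn (Wt l γ) (uIcc (0:ℝ) x) := by
      apply contOn_Wt
      intro y hy
      rw [uIcc_of_le hx.le] at hy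
      simp only [mem_Ioi]
      linarith [hy.1]
    apply intervalIntegral.integral_mono_on hx.le
      ((hderc.pow 2).intervalIntegrable 0 x)
      (ContinuousOn.intervalIntegrable
        (((hderc.continuousOn.pow 2).mul hWcont).mul continuousOn_const))
    · intro y hy
      have hWyx : Wt l γ x ≤ Wt l γ y := Wt_anti l γ hγ (by linarith [hy.1]) hy.2
      have hone : 1 ≤ Wt l γ y * (Wt l γ x)⁻¹ := by
        rw [← div_eq_mul_inv, le_div_iff₀ hWx]
        linarith
      show (deriv f y) ^ 2 ≤ (deriv f y) ^ 2 * Wt l γ y * (Wt l γ x)⁻¹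
      nlinarith [sq_nonneg (deriv f y)]
  have h3 : (∫ y in (0:ℝ)..x, (deriv f y) ^ 2 * Wt l γ y * (Wt l γ x)⁻¹)
      = (∫ y in (0:ℝ)..x, (deriv f y) ^ 2 * Wt l γ y) * (Wt l γ x)⁻¹ := by
    rw [← intervalIntegral.integral_mul_const]
  have h4 : (∫ y in (0:ℝ)..x, (deriv f y) ^ 2 * Wt l γ y) ≤ Nint l γ f := by
    rw [intervalIntegral.integral_of_le hx.le]
    apply setIntegral_mono_set (integrable_N hf hcs hts).integrableOn
      (ae_of_all _ (fun y => mul_nonneg (sq_nonneg _) (Wt_pos l γ y).le))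
      (HasSubset.Subset.eventuallyLE (Ioc_subset_Ioi_self))
  -- combine
  have h5 : (f x) ^ 2 ≤ x * (Nint l γ f * (Wt l γ x)⁻¹) := by
    calc (f x) ^ 2 ≤ x * ∫ y in (0:ℝ)..x, (deriv f y) ^ 2 := hcs2
      _ ≤ x * ((∫ y in (0:ℝ)..x, (deriv f y) ^ 2 * Wt l γ y) * (Wt l γ x)⁻¹) := by
          apply mul_le_mul_of_nonneg_left _ hx.le
          rw [← h3]; exact h2
      _ ≤ x * (Nint l γ f * (Wt l γ x)⁻¹) := by
          apply mul_le_mul_of_nonneg_left _ hx.le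
          exact mul_le_mul_of_nonneg_right h4 (inv_nonneg.2 hWx.le)
  have h6 := mul_le_mul_of_nonneg_right h5 hWx.le
  calc (f x) ^ 2 * Wt l γ x ≤ x * (Nint l γ f * (Wt l γ x)⁻¹) * Wt l γ x := h6
    _ = x * Nint l γ f := by field_simp

lemma hardy_split (hl : 0 ≤ l) (hγ : 0 < γ) (hf : ContDiff ℝ 1 f)
    (hcs : HasCompactSupport f) (hts : tsupport f ⊆ Ioi 0) {R : ℝ} (hR : 0 < R) :
    Dint l γ f ≤ Nint l γ f * R ^ 2 / 2 + (1 + R) ^ (-l) * Pint l γ f := by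
  have hD := integrable_D (l := l) (γ := γ) hf hcs hts
  have hP := integrable_P (l := l) (γ := γ) hf hcs hts
  have hsplit : Dint l γ f = (∫ x in Ioc (0:ℝ) R, (f x) ^ 2 * Wt l γ x)
      + ∫ x in Ioi R, (f x) ^ 2 * Wt l γ x := by
    rw [Dint, ← Ioc_union_Ioi_eq_Ioi hR.le,
      setIntegral_union (Ioc_disjoint_Ioi le_rfl) measurableSet_Ioi
        hD.integrableOn hD.integrableOn]
  have bound1 : (∫ x in Ioc (0:ℝ) R, (f x) ^ 2 * Wt l γ x)
      ≤ Nint l γ f * R ^ 2 / 2 := by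
    have hb : (∫ x in Ioc (0:ℝ) R, (f x) ^ 2 * Wt l γ x)
        ≤ ∫ x in Ioc (0:ℝ) R, x * Nint l γ f := by
      apply setIntegral_mono_on hD.integrableOn
        ((continuous_id.mul continuous_const).integrableOn_Ioc) measurableSet_Ioc
      intro x hx
      exact hardy_ptwise hγ hf hcs hts hx.1
    have hval : (∫ x in Ioc (0:ℝ) R, x * Nint l γ f)
        = Nint l γ f * R ^ 2 / 2 := by
      rw [integral_mul_const, ← intervalIntegral.integral_of_le hR.le,
        integral_id]
      ring
    linarith
  have bound2 : (∫ x in Ioi R, (f x) ^ 2 * Wt l γ x)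
      ≤ (1 + R) ^ (-l) * Pint l γ f := by
    have hRl : (0:ℝ) < (1 + R) ^ l := Real.rpow_pos_of_pos (by linarith) l
    have hRnl : (1 + R : ℝ) ^ (-l) = ((1 + R) ^ l)⁻¹ := by
      rw [Real.rpow_neg (by linarith)]
    have hb : (∫ x in Ioi R, (f x) ^ 2 * Wt l γ x)
        ≤ ∫ x in Ioi R, (1 + R) ^ (-l) * ((f x) ^ 2 * (1 + x) ^ l * Wt l γ x) := by
      apply setIntegral_mono_on (hD.integrableOn)
        ((hP.const_mul _).integrableOn) measurableSet_Ioi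
      intro x hx
      simp only [mem_Ioi] at hx
      have hmon : (1 + R : ℝ) ^ l ≤ (1 + x) ^ l :=
        Real.rpow_le_rpow (by linarith) (by linarith) hl
      rw [hRnl]
      have hW := (Wt_pos l γ x).le
      have hx2 := sq_nonneg (f x)
      calc (f x) ^ 2 * Wt l γ x = ((1 + R) ^ l)⁻¹ * ((f x) ^ 2 * (1 + R) ^ l * Wt l γ x) := by
            field_simp
        _ ≤ ((1 + R) ^ l)⁻¹ * ((f x) ^ 2 * (1 + x) ^ l * Wt l γ x) := by
            apply mul_le_mul_of_nonneg_left _ (inv_nonneg.2 hRl.le)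
            apply mul_le_mul_of_nonneg_right _ hW
            exact mul_le_mul_of_nonneg_left hmon hx2
    have hb2 : (∫ x in Ioi R, (1 + R) ^ (-l) * ((f x) ^ 2 * (1 + x) ^ l * Wt l γ x))
        = (1 + R) ^ (-l) * ∫ x in Ioi R, (f x) ^ 2 * (1 + x) ^ l * Wt l γ x :=
      integral_const_mul _ _
    have hb3 : (∫ x in Ioi R, (f x) ^ 2 * (1 + x) ^ l * Wt l γ x) ≤ Pint l γ f := by
      apply setIntegral_mono_set hP.integrableOn
        ((ae_restrict_iff' measurableSet_Ioi).2 (ae_of_all _ (fun y hy =>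
          mul_nonneg (mul_nonneg (sq_nonneg _)
            (Real.rpow_nonneg (by simp only [mem_Ioi] at hy; linarith) l))
            (Wt_pos l γ y).le)))
        (HasSubset.Subset.eventuallyLE (Ioi_subset_Ioi hR.le))
    have hnl : (0:ℝ) ≤ (1 + R) ^ (-l) := Real.rpow_nonneg (by linarith) _
    calc (∫ x in Ioi R, (f x) ^ 2 * Wt l γ x)
        ≤ (1 + R) ^ (-l) * ∫ x in Ioi R, (f x) ^ 2 * (1 + x) ^ l * Wt l γ x := by
          rw [← hb2]; exact hb
      _ ≤ (1 + R) ^ (-l) * Pint l γ f := mul_le_mul_of_nonneg_left hb3 hnl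
  linarith

end Hardy


section LowerSmall

variable {l γ : ℝ} {f : ℝ → ℝ}

lemma lower_small (hl : 0 ≤ l) (hγ : 0 < γ) (hγ1 : γ ≤ 1) (hf : ContDiff ℝ 1 f)
    (hcs : HasCompactSupport f) (hts : tsupport f ⊆ Ioi 0) (hne : f ≠ 0) :
    γ ^ (2 / (l + 1)) * Dint l γ f ≤ 2 * Nint l γ f := by
  have hl1 : (0:ℝ) < l + 1 := by linarith
  set β : ℝ := γ ^ (1 / (l + 1)) with hβdef
  set R : ℝ := γ ^ (-(1 / (l + 1))) with hRdef
  have hβ : 0 < β := Real.rpow_pos_of_pos hγ _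
  have hR : 0 < R := Real.rpow_pos_of_pos hγ _
  have hRβ : R * β = 1 := by
    rw [hβdef, hRdef, ← Real.rpow_add hγ]
    norm_num
  have hR2 : R ^ 2 * β ^ 2 = 1 := by nlinarith [hRβ]
  have hexp1 : -(1 / (l + 1)) * -l + 1 / (l + 1) = 1 := by field_simp
  have hRlβ : R ^ (-l) * β = γ := by
    rw [hRdef, hβdef, ← Real.rpow_mul hγ.le, ← Real.rpow_add hγ, hexp1, Real.rpow_one]
  have hβ2 : β ^ 2 = γ ^ (2 / (l + 1)) := by
    rw [hβdef, ← Real.rpow_natCast (γ ^ (1 / (l + 1))) 2, ← Real.rpow_mul hγ.le]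
    congr 1
    push_cast
    ring
  -- main inequalities
  set D := Dint l γ f with hD
  set N := Nint l γ f with hN
  set P := Pint l γ f with hPd
  have hPnn : 0 ≤ P := Pint_nonneg
  have hDnn : 0 ≤ D := Dint_nonneg
  have hNnn : 0 ≤ N := Nint_nonneg
  have hibp := ibp l γ hf hcs hts hne
  have hcsb := epsCS l γ hf hcs hts (ε := β / 2) (by positivity)
  have step1 : γ * P ≤ β / 4 * D + (1 / β) * N := by
    rw [← hibp]
    refine le_trans hcsb (le_of_eq ?_)
    rw [← hD, ← hN]
    rw [div_eq_mul_inv (β:ℝ) 2, mul_inv, inv_inv]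
    field_simp
    ring
  have hhs := hardy_split hl hγ hf hcs hts hR
  have h1R : (1 + R) ^ (-l) ≤ R ^ (-l) :=
    Real.rpow_le_rpow_of_nonpos hR (by linarith) (neg_nonpos.2 hl)
  have hC : D ≤ N * R ^ 2 / 2 + R ^ (-l) * P := by
    refine le_trans hhs ?_
    have := mul_le_mul_of_nonneg_right h1R hPnn
    linarith
  have hC2 : γ * β ^ 2 * D ≤ γ * β ^ 2 * (N * R ^ 2 / 2 + R ^ (-l) * P) :=
    mul_le_mul_of_nonneg_left hC (by positivity)
  have e3 : γ * β ^ 2 * (N * R ^ 2 / 2 + R ^ (-l) * P)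
      = γ * N / 2 + γ * β * (γ * P) := by
    calc γ * β ^ 2 * (N * R ^ 2 / 2 + R ^ (-l) * P)
        = γ * N * (R ^ 2 * β ^ 2) / 2 + γ * β * ((R ^ (-l) * β) * P) := by ring
      _ = γ * N / 2 + γ * β * (γ * P) := by rw [hR2, hRlβ]; ring
  have step4 : γ * β * (γ * P) ≤ γ * β * (β / 4 * D + (1 / β) * N) :=
    mul_le_mul_of_nonneg_left step1 (by positivity)
  have step5 : γ * β * (β / 4 * D + (1 / β) * N) = γ * β ^ 2 * D / 4 + γ * N := by
    field_simp
  have hfin : γ * (β ^ 2 * D) ≤ γ * (2 * N) := by nlinarith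
  have := le_of_mul_le_mul_left hfin hγ
  rw [← hβ2]
  linarith

end LowerSmall


section Bump

noncomputable def phi0 : ContDiffBump (c := (1/2 : ℝ)) :=
  ⟨1/5, 2/5, by norm_num, by norm_num⟩

noncomputable def K0 : ℝ := ∫ x : ℝ, (deriv (⇑phi0) x) ^ 2
noncomputable def K2 : ℝ := ∫ x : ℝ, ((phi0 : ℝ → ℝ) x) ^ 2

lemma phi0_cd : ContDiff ℝ 1 (⇑phi0) := phi0.contDiff

lemma phi0_cs : HasCompactSupport (⇑phi0) := phi0.hasCompactSupport

lemma phi0_deriv_cs : HasCompactSupport (deriv (⇑phi0)) := phi0_cs.deriv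

lemma integrable_phi0_sq : Integrable (fun x => ((phi0 : ℝ → ℝ) x) ^ 2) := by
  have h : HasCompactSupport (fun x => ((phi0 : ℝ → ℝ) x) ^ 2) :=
    (phi0_cs.comp_left (g := fun y : ℝ => y ^ 2) (by norm_num))
  exact (phi0.continuous.pow 2).integrable_of_hasCompactSupport h

lemma integrable_phi0_deriv_sq : Integrable (fun x => (deriv (⇑phi0) x) ^ 2) := by
  have h : HasCompactSupport (fun x => (deriv (⇑phi0) x) ^ 2) :=
    (phi0_deriv_cs.comp_left (g := fun y : ℝ => y ^ 2) (by norm_num))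
  exact ((phi0_cd.continuous_deriv le_rfl).pow 2).integrable_of_hasCompactSupport h

lemma K0_nonneg : 0 ≤ K0 := integral_nonneg (fun x => sq_nonneg _)

lemma K2_pos : 0 < K2 := by
  have h1 : (2/5 : ℝ) ≤ ∫ x in Icc (3/10 : ℝ) (7/10), ((phi0 : ℝ → ℝ) x) ^ 2 := by
    have he : EqOn (fun x => ((phi0 : ℝ → ℝ) x) ^ 2) (fun _ => (1:ℝ))
        (Icc (3/10 : ℝ) (7/10)) := by
      intro x hx
      have hmem : x ∈ Metric.closedBall (1/2 : ℝ) (1/5) := by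
        rw [Real.closedBall_eq_Icc]
        constructor <;> [linarith [hx.1]; linarith [hx.2]]
      simp [phi0.one_of_mem_closedBall hmem]
    rw [setIntegral_congr_fun measurableSet_Icc he]
    rw [setIntegral_const, Real.volume_real_Icc, smul_eq_mul, mul_one]
    norm_num
  have h2 : (∫ x in Icc (3/10 : ℝ) (7/10), ((phi0 : ℝ → ℝ) x) ^ 2) ≤ K2 :=
    setIntegral_le_integral integrable_phi0_sq (ae_of_all _ (fun x => sq_nonneg _))
  unfold K2 at *
  linarith

variable {s L : ℝ}

noncomputable def fb (s L : ℝ) : ℝ → ℝ := fun x => (phi0 : ℝ → ℝ) ((x - s) / L)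

lemma fb_cd (hL : L ≠ 0) : ContDiff ℝ 1 (fb s L) :=
  phi0_cd.comp ((contDiff_id.sub contDiff_const).div_const L)

lemma fb_hasDerivAt (hL : L ≠ 0) (x : ℝ) :
    HasDerivAt (fb s L) (deriv (⇑phi0) ((x - s) / L) * (1 / L)) x := by
  have hin : HasDerivAt (fun x : ℝ => (x - s) / L) (1 / L) x := by
    simpa using ((hasDerivAt_id x).sub_const s).div_const L
  have hout : HasDerivAt (⇑phi0) (deriv (⇑phi0) ((x - s) / L)) ((x - s) / L) :=
    ((phi0_cd.differentiable one_ne_zero) _).hasDerivAt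
  exact HasDerivAt.comp x hout hin

lemma fb_deriv (hL : L ≠ 0) (x : ℝ) :
    deriv (fb s L) x = deriv (⇑phi0) ((x - s) / L) * (1 / L) :=
  (fb_hasDerivAt hL x).deriv

lemma fb_support (hL : 0 < L) : tsupport (fb s L) ⊆ Icc (s + L/10) (s + 9*L/10) := by
  have hsub : Function.support (fb s L) ⊆ Icc (s + L/10) (s + 9*L/10) := by
    intro x hx
    have h1 : (x - s) / L ∈ Function.support (⇑phi0) := by
      simpa [fb, Function.mem_support] using hx
    rw [phi0.support_eq] at h1
    have h2 : |(x - s) / L - 1/2| < 2/5 := by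
      simpa [Real.dist_eq, phi0] using Metric.mem_ball.1 h1
    rw [abs_lt] at h2
    have h3 : (x - s) / L * L = x - s := div_mul_cancel₀ _ hL.ne'
    constructor
    · nlinarith [h2.1, hL]
    · nlinarith [h2.2, hL]
  exact closure_minimal hsub isClosed_Icc

lemma fb_cs (hL : 0 < L) : HasCompactSupport (fb s L) :=
  HasCompactSupport.of_support_subset_isCompact isCompact_Icc
    (subset_trans (subset_tsupport _) (fb_support hL))

lemma fb_ne (hL : 0 < L) : fb s L ≠ 0 := by
  intro h
  have h1 : fb s L (s + L/2) = 1 := by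
    have : (s + L/2 - s) / L = 1/2 := by field_simp; ring
    rw [fb, this]
    exact phi0.one_of_mem_closedBall (by
      simp only [Metric.mem_closedBall, Real.dist_eq, phi0]
      norm_num)
  rw [h] at h1
  simp at h1
  
lemma fb_int_sq (hL : 0 < L) : ∫ x : ℝ, (fb s L x) ^ 2 = L * K2 := by
  have h1 : ∫ x : ℝ, (fb s L x) ^ 2
      = ∫ x : ℝ, (fun y => ((phi0 : ℝ → ℝ) (y / L)) ^ 2) (x - s) := by
    rfl
  rw [h1, integral_sub_right_eq_self (fun y => ((phi0 : ℝ → ℝ) (y / L)) ^ 2) s]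
  rw [Measure.integral_comp_div (fun y => ((phi0 : ℝ → ℝ) y) ^ 2) L]
  rw [abs_of_pos hL, smul_eq_mul]
  rfl

lemma fb_int_deriv_sq (hL : 0 < L) :
    ∫ x : ℝ, (deriv (fb s L) x) ^ 2 = K0 / L := by
  have h1 : ∀ x : ℝ, (deriv (fb s L) x) ^ 2
      = (deriv (⇑phi0) ((x - s) / L)) ^ 2 * (1 / L^2) := by
    intro x
    rw [fb_deriv hL.ne' x]
    ring
  rw [integral_congr_ae (ae_of_all _ h1), integral_mul_const]
  have h2 : ∫ x : ℝ, (deriv (⇑phi0) ((x - s) / L)) ^ 2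
      = ∫ x : ℝ, (fun y => (deriv (⇑phi0) (y / L)) ^ 2) (x - s) := rfl
  rw [h2, integral_sub_right_eq_self (fun y => (deriv (⇑phi0) (y / L)) ^ 2) s]
  rw [Measure.integral_comp_div (fun y => (deriv (⇑phi0) y) ^ 2) L]
  rw [abs_of_pos hL, smul_eq_mul]
  have : (∫ y : ℝ, (deriv (⇑phi0) y) ^ 2) = K0 := rfl
  rw [this]
  field_simp

end Bump


section Upper

lemma lam0_upper (l γ s L Δ : ℝ) (hγ : 0 < γ) (hs : 0 < s) (hL : 0 < L) (hΔ0 : 0 ≤ Δ)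
    (hosc : ∀ x ∈ Icc s (s + L), BB l γ s - BB l γ x ≤ Δ) :
    lam0 (fun _ => 1) (fun x => -(γ * (1 + x) ^ l)) ≤
      ENNReal.ofReal (Real.exp (2 * Δ) * (K0 / (2 * K2)) / L ^ 2) := by
  classical
  set f := fb s L with hfdef
  have hcd : ContDiff ℝ 1 f := fb_cd hL.ne'
  have hcs : HasCompactSupport f := fb_cs hL
  have hts0 : tsupport f ⊆ Icc (s + L/10) (s + 9*L/10) := fb_support hL
  have hts : tsupport f ⊆ Ioi 0 := fun x hx => by
    have := (hts0 hx).1; simp only [mem_Ioi]; linarith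
  have htsIcc : tsupport f ⊆ Icc s (s + L) := fun x hx =>
    ⟨by linarith [(hts0 hx).1], by linarith [(hts0 hx).2]⟩
  have hne : f ≠ 0 := fb_ne hL
  have hmem : f ∈ {f : ℝ → ℝ |
      ContDiff ℝ 1 f ∧ HasCompactSupport f ∧ tsupport f ⊆ Ioi (0:ℝ) ∧ f ≠ 0} :=
    ⟨hcd, hcs, hts, hne⟩
  have hB : Bfun (fun _ => 1) (fun x : ℝ => -(γ * (1 + x) ^ l)) = BB l γ := Bfun_eq l γ
  have h1 : lam0 (fun _ => 1) (fun x => -(γ * (1 + x) ^ l)) ≤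
      ENNReal.ofReal ((2⁻¹ * Nint l γ f) / Dint l γ f) := by
    have h0 := iInf₂_le (f := fun (f : ℝ → ℝ) (_ : f ∈ {f : ℝ → ℝ |
        ContDiff ℝ 1 f ∧ HasCompactSupport f ∧ tsupport f ⊆ Ioi (0:ℝ) ∧ f ≠ 0}) =>
      ENNReal.ofReal
        ((2⁻¹ * ∫ x in Ioi (0:ℝ), (fun _ => (1:ℝ)) x * (deriv f x) ^ 2 *
            Real.exp (2 * Bfun (fun _ => 1) (fun x => -(γ * (1 + x) ^ l)) x)) /
          ∫ x in Ioi (0:ℝ), (f x) ^ 2 *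
            Real.exp (2 * Bfun (fun _ => 1) (fun x => -(γ * (1 + x) ^ l)) x))) f hmem
    rw [lam0]
    refine le_trans h0 (le_of_eq ?_)
    rw [hB]
    simp only [one_mul]
    rfl
  refine le_trans h1 (ENNReal.ofReal_le_ofReal ?_)
  -- numerator bound
  have hWs := Wt_pos l γ s
  have hint_constW : Integrable (fun x => (deriv f x) ^ 2 * Wt l γ s) := by
    apply integrable_of_van _ (tsupport f) hcs hts
    · intro x _
      exact (((hcd.continuous_deriv le_rfl).pow 2).mul continuous_const).continuousAt
    · intro x hx
      simp [derivvan hx]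
  have hNb : Nint l γ f ≤ Wt l γ s * (K0 / L) := by
    have hmono : ∀ x ∈ Ioi (0:ℝ),
        (deriv f x) ^ 2 * Wt l γ x ≤ (deriv f x) ^ 2 * Wt l γ s := by
      intro x _
      by_cases hxK : x ∈ tsupport f
      · have hxs : s ≤ x := (htsIcc hxK).1
        exact mul_le_mul_of_nonneg_left (Wt_anti l γ hγ (by linarith) hxs) (sq_nonneg _)
      · simp [derivvan hxK]
    have h2 := setIntegral_mono_on
      (integrable_N (l := l) (γ := γ) hcd hcs hts).integrableOn
      hint_constW.integrableOn measurableSet_Ioi hmono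
    have h3 : (∫ x in Ioi (0:ℝ), (deriv f x) ^ 2 * Wt l γ s)
        = (∫ x : ℝ, (deriv f x) ^ 2) * Wt l γ s := by
      rw [integral_mul_const]
      congr 1
      exact setInt_eq_int _ hts (fun x hx => by simp [derivvan hx])
    rw [h3, fb_int_deriv_sq hL] at h2
    calc Nint l γ f ≤ K0 / L * Wt l γ s := h2
      _ = Wt l γ s * (K0 / L) := by ring
  -- denominator bound
  have hint_constD : Integrable (fun x => (f x) ^ 2 * (Wt l γ s * Real.exp (-(2*Δ)))) := by
    apply integrable_of_van _ (tsupport f) hcs hts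
    · intro x _
      exact ((hcd.continuous.pow 2).mul continuous_const).continuousAt
    · intro x hx
      simp [image_eq_zero_of_notMem_tsupport hx]
  have hDb : Wt l γ s * Real.exp (-(2*Δ)) * (L * K2) ≤ Dint l γ f := by
    have hmono : ∀ x ∈ Ioi (0:ℝ),
        (f x) ^ 2 * (Wt l γ s * Real.exp (-(2*Δ))) ≤ (f x) ^ 2 * Wt l γ x := by
      intro x _
      by_cases hxK : x ∈ tsupport f
      · apply mul_le_mul_of_nonneg_left _ (sq_nonneg _)
        have hx1 := hosc x (htsIcc hxK)
        have : Wt l γ s * Real.exp (-(2*Δ)) = Real.exp (2 * BB l γ s + -(2*Δ)) := by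
          rw [Real.exp_add]; rfl
        rw [this]
        apply Real.exp_le_exp.2
        show 2 * BB l γ s + -(2*Δ) ≤ 2 * BB l γ x
        linarith
      · simp [image_eq_zero_of_notMem_tsupport hxK]
    have h2 := setIntegral_mono_on hint_constD.integrableOn
      (integrable_D (l := l) (γ := γ) hcd hcs hts).integrableOn measurableSet_Ioi hmono
    have h3 : (∫ x in Ioi (0:ℝ), (f x) ^ 2 * (Wt l γ s * Real.exp (-(2*Δ))))
        = (∫ x : ℝ, (f x) ^ 2) * (Wt l γ s * Real.exp (-(2*Δ))) := by
      rw [integral_mul_const]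
      congr 1
      exact setInt_eq_int _ hts (fun x hx => by simp [image_eq_zero_of_notMem_tsupport hx])
    rw [h3, fb_int_sq hL] at h2
    calc Wt l γ s * Real.exp (-(2*Δ)) * (L * K2)
        = L * K2 * (Wt l γ s * Real.exp (-(2*Δ))) := by ring
      _ ≤ Dint l γ f := h2
  have hDpos : 0 < Dint l γ f := Dint_pos hcd hcs hts hne
  have hdpos : 0 < Wt l γ s * Real.exp (-(2*Δ)) * (L * K2) := by
    have := Real.exp_pos (-(2*Δ))
    have := K2_pos
    positivity
  have hnum_nonneg : 0 ≤ 2⁻¹ * (Wt l γ s * (K0 / L)) := by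
    have := K0_nonneg
    positivity
  calc (2⁻¹ * Nint l γ f) / Dint l γ f
      ≤ (2⁻¹ * (Wt l γ s * (K0 / L))) / (Wt l γ s * Real.exp (-(2*Δ)) * (L * K2)) := by
        apply div_le_div₀ hnum_nonneg _ hdpos hDb
        nlinarith [hNb]
    _ = Real.exp (2 * Δ) * (K0 / (2 * K2)) / L ^ 2 := by
        rw [Real.exp_neg]
        have h4 := Real.exp_pos (2*Δ)
        have h5 := K2_pos
        field_simp

end Upper


section Final

lemma lam0_lower_of (l γ r : ℝ)
    (hr : ∀ f : ℝ → ℝ, ContDiff ℝ 1 f → HasCompactSupport f →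
      tsupport f ⊆ Ioi 0 → f ≠ 0 → r ≤ (2⁻¹ * Nint l γ f) / (Dint l γ f)) :
    ENNReal.ofReal r ≤ lam0 (fun _ => 1) (fun x => -(γ * (1 + x) ^ l)) := by
  rw [lam0]
  refine le_iInf₂ fun f hf => ?_
  obtain ⟨h1, h2, h3, h4⟩ := hf
  have hB : Bfun (fun _ => 1) (fun x : ℝ => -(γ * (1 + x) ^ l)) = BB l γ := Bfun_eq l γ
  rw [hB]
  simp only [one_mul]
  exact ENNReal.ofReal_le_ofReal (hr f h1 h2 h3 h4)

lemma upper_neg (l γ : ℝ) (hl : l < 0) (hγ : 0 < γ) {L : ℝ} (hL1 : 1 ≤ L) :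
    lam0 (fun _ => 1) (fun x => -(γ * (1 + x) ^ l)) ≤
      ENNReal.ofReal (Real.exp (2 * 1) * (K0 / (2 * K2)) / L ^ 2) := by
  have hL : 0 < L := lt_of_lt_of_le one_pos hL1
  have hγL : 0 < γ * L := by positivity
  set T := (γ * L) ^ (-(1/l)) with hT
  have hTpos : 0 < T := Real.rpow_pos_of_pos hγL _
  set s := max 1 T with hs
  have hs1 : (1:ℝ) ≤ s := le_max_left _ _
  have hspos : 0 < s := by linarith
  have hTs : T ≤ s := le_max_right _ _
  have hTl : T ^ l = (γ * L)⁻¹ := by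
    rw [hT, ← Real.rpow_mul hγL.le]
    rw [show -(1/l) * l = -1 by field_simp [hl.ne]]
    exact Real.rpow_neg_one _
  have hsl : (1 + s) ^ l ≤ (γ * L)⁻¹ := by
    calc (1 + s) ^ l ≤ T ^ l :=
          Real.rpow_le_rpow_of_nonpos hTpos (by linarith) hl.le
      _ = (γ * L)⁻¹ := hTl
  apply lam0_upper l γ s L 1 hγ hspos hL one_pos.le
  intro x hx
  have hM : ∀ y ∈ Icc s (s + L), (1 + y) ^ l ≤ (1 + s) ^ l := fun y hy =>
    Real.rpow_le_rpow_of_nonpos (by linarith) (by linarith [hy.1]) hl.le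
  have hosc := BB_osc l γ hγ hspos hL hM hx
  have h2 : γ * L * (1 + s) ^ l ≤ 1 := by
    calc γ * L * (1 + s) ^ l ≤ γ * L * (γ * L)⁻¹ :=
          mul_le_mul_of_nonneg_left hsl hγL.le
      _ = 1 := mul_inv_cancel₀ hγL.ne'
  linarith

lemma lam0_zero_of_neg (l : ℝ) (hl : l < 0) (γ : ℝ) (hγ : 0 < γ) :
    lam0 (fun _ => 1) (fun x => -(γ * (1 + x) ^ l)) = 0 := by
  refine le_antisymm ?_ zero_le
  refine ENNReal.le_of_forall_pos_le_add fun ε hε _ => ?_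
  rw [zero_add]
  have hεp : (0:ℝ) < (ε:ℝ) := by exact_mod_cast hε
  set Cr : ℝ := Real.exp (2 * 1) * (K0 / (2 * K2)) with hCr
  have hCr0 : 0 ≤ Cr :=
    mul_nonneg (Real.exp_pos _).le (div_nonneg K0_nonneg (by linarith [K2_pos]))
  set L := max 1 (Real.sqrt (Cr / ε)) with hLdef
  have hL1 : (1:ℝ) ≤ L := le_max_left _ _
  have hLs : Real.sqrt (Cr / ε) ≤ L := le_max_right _ _
  have hL0 : (0:ℝ) < L := lt_of_lt_of_le one_pos hL1
  have hsq : Cr / ε ≤ L ^ 2 := by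
    have h := Real.sq_sqrt (div_nonneg hCr0 hεp.le)
    nlinarith [Real.sqrt_nonneg (Cr / (ε:ℝ))]
  have hbound : Cr / L ^ 2 ≤ ε := by
    rw [div_le_iff₀ (by positivity)]
    rw [div_le_iff₀ hεp] at hsq
    nlinarith
  calc lam0 (fun _ => 1) (fun x => -(γ * (1 + x) ^ l))
      ≤ ENNReal.ofReal (Real.exp (2 * 1) * (K0 / (2 * K2)) / L ^ 2) :=
        upper_neg l γ hl hγ hL1
    _ ≤ ENNReal.ofReal ε := ENNReal.ofReal_le_ofReal (by rw [← hCr]; exact hbound)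
    _ = (ε : ℝ≥0∞) := ENNReal.ofReal_coe_nnreal

end Final


lemma upper_large (l γ : ℝ) (hl : 0 ≤ l) (hγ : 1 < γ) :
    lam0 (fun _ => 1) (fun x => -(γ * (1 + x) ^ l)) ≤
      ENNReal.ofReal ((Real.exp (2 * 3 ^ l) * (K0 / (2 * K2) + 1)) * γ ^ 2) := by
  have hγ0 : 0 < γ := by linarith
  have hΔ0 : (0:ℝ) ≤ 3 ^ l := Real.rpow_nonneg (by norm_num) l
  have h1 : lam0 (fun _ => 1) (fun x => -(γ * (1 + x) ^ l)) ≤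
      ENNReal.ofReal (Real.exp (2 * 3 ^ l) * (K0 / (2 * K2)) / (1/γ) ^ 2) := by
    apply lam0_upper l γ (1/γ) (1/γ) (3 ^ l) hγ0 (by positivity) (by positivity) hΔ0
    intro x hx
    have hM : ∀ y ∈ Icc (1/γ) (1/γ + 1/γ), (1 + y) ^ l ≤ (1 + 2/γ) ^ l := by
      intro y hy
      have hy1 : 1/γ ≤ y := hy.1
      have hy2 : y ≤ 1/γ + 1/γ := hy.2
      have hop : 0 < 1/γ := one_div_pos.mpr hγ0
      have h2g : (2:ℝ)/γ = 1/γ + 1/γ := by ring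
      apply Real.rpow_le_rpow (by linarith) (by rw [h2g]; linarith) hl
    have hosc := BB_osc l γ hγ0 (by positivity) (by positivity) hM hx
    have e1 : γ * (1/γ) * (1 + 2/γ) ^ l = (1 + 2/γ) ^ l := by field_simp
    have h3 : (1 + 2/γ) ^ l ≤ 3 ^ l := by
      have h2g : (2:ℝ)/γ ≤ 2 := by rw [div_le_iff₀ hγ0]; nlinarith
      apply Real.rpow_le_rpow (by positivity) (by linarith) hl
    linarith
  refine le_trans h1 (ENNReal.ofReal_le_ofReal ?_)
  have h4 : Real.exp (2 * 3 ^ l) * (K0 / (2 * K2)) / (1/γ) ^ 2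
      = Real.exp (2 * 3 ^ l) * (K0 / (2 * K2)) * γ ^ 2 := by
    field_simp
  rw [h4]
  have hE := Real.exp_pos (2 * 3 ^ l)
  have hq : 0 ≤ K0 / (2 * K2) := div_nonneg K0_nonneg (by linarith [K2_pos])
  nlinarith [sq_nonneg γ]

lemma upper_small (l γ : ℝ) (hl : 0 ≤ l) (hγ0 : 0 < γ) (hγ1 : γ ≤ 1) :
    lam0 (fun _ => 1) (fun x => -(γ * (1 + x) ^ l)) ≤
      ENNReal.ofReal ((Real.exp (2 * 3 ^ l) * (K0 / (2 * K2) + 1)) * γ ^ (2/(l+1))) := by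
  have hl1 : (0:ℝ) < l + 1 := by linarith
  have hΔ0 : (0:ℝ) ≤ 3 ^ l := Real.rpow_nonneg (by norm_num) l
  set R := γ ^ (-(1/(l+1))) with hRdef
  have hRpos : 0 < R := Real.rpow_pos_of_pos hγ0 _
  have hR1 : (1:ℝ) ≤ R := by
    calc (1:ℝ) = γ ^ (0:ℝ) := (Real.rpow_zero γ).symm
      _ ≤ R := Real.rpow_le_rpow_of_exponent_ge hγ0 hγ1
        (by have : (0:ℝ) < 1/(l+1) := by positivity
            linarith)
  have hRl1 : R ^ (l+1) = γ⁻¹ := by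
    rw [hRdef, ← Real.rpow_mul hγ0.le,
      show -(1/(l+1)) * (l+1) = -1 by field_simp, Real.rpow_neg_one]
  have h1 : lam0 (fun _ => 1) (fun x => -(γ * (1 + x) ^ l)) ≤
      ENNReal.ofReal (Real.exp (2 * 3 ^ l) * (K0 / (2 * K2)) / R ^ 2) := by
    apply lam0_upper l γ R R (3 ^ l) hγ0 hRpos hRpos hΔ0
    intro x hx
    have hM : ∀ y ∈ Icc R (R + R), (1 + y) ^ l ≤ (1 + 2*R) ^ l := by
      intro y hy
      have hy1 : R ≤ y := hy.1
      have hy2 : y ≤ R + R := hy.2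
      apply Real.rpow_le_rpow (by linarith) (by linarith) hl
    have hosc := BB_osc l γ hγ0 hRpos hRpos hM hx
    have h2 : (1 + 2*R) ^ l ≤ (3*R) ^ l :=
      Real.rpow_le_rpow (by linarith) (by linarith) hl
    have h3 : (3*R : ℝ) ^ l = 3 ^ l * R ^ l := Real.mul_rpow (by norm_num) hRpos.le
    have h4 : γ * R * (3 ^ l * R ^ l) = 3 ^ l * (γ * R ^ (l+1)) := by
      rw [Real.rpow_add_one hRpos.ne' l]
      ring
    have h5 : γ * R ^ (l+1) = 1 := by
      rw [hRl1]; exact mul_inv_cancel₀ hγ0.ne'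
    have h6 : γ * R * (1 + 2*R) ^ l ≤ γ * R * (3 ^ l * R ^ l) :=
      mul_le_mul_of_nonneg_left (le_trans h2 (le_of_eq h3)) (by positivity)
    rw [h4, h5, mul_one] at h6
    linarith
  refine le_trans h1 (ENNReal.ofReal_le_ofReal ?_)
  have hR2 : R ^ 2 = (γ ^ (2/(l+1)))⁻¹ := by
    rw [hRdef, ← Real.rpow_natCast (γ ^ (-(1/(l+1)))) 2, ← Real.rpow_mul hγ0.le,
      ← Real.rpow_neg hγ0.le]
    congr 1
    push_cast
    ring
  rw [hR2, div_eq_mul_inv, inv_inv]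
  have hE := Real.exp_pos (2 * 3 ^ l)
  have hq : 0 ≤ K0 / (2 * K2) := div_nonneg K0_nonneg (by linarith [K2_pos])
  have hrp : 0 ≤ γ ^ (2/(l+1)) := Real.rpow_nonneg hγ0.le _
  nlinarith

theorem stmt7 (l : ℝ) :
    (l < 0 → ∀ γ : ℝ, 0 < γ →
      lam0 (fun _ => 1) (fun x => -(γ * (1 + x) ^ l)) = 0) ∧
    (0 ≤ l → ∃ c C : ℝ, 0 < c ∧ 0 < C ∧
      (∀ γ : ℝ, 1 < γ →
        ENNReal.ofReal (c * γ ^ 2) ≤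
            lam0 (fun _ => 1) (fun x => -(γ * (1 + x) ^ l)) ∧
          lam0 (fun _ => 1) (fun x => -(γ * (1 + x) ^ l)) ≤
            ENNReal.ofReal (C * γ ^ 2)) ∧
      (∀ γ : ℝ, 0 < γ → γ ≤ 1 →
        ENNReal.ofReal (c * γ ^ (2 / (l + 1))) ≤
            lam0 (fun _ => 1) (fun x => -(γ * (1 + x) ^ l)) ∧
          lam0 (fun _ => 1) (fun x => -(γ * (1 + x) ^ l)) ≤
            ENNReal.ofReal (C * γ ^ (2 / (l + 1))))) := by
  constructor
  · intro hl γ hγ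
    exact lam0_zero_of_neg l hl γ hγ
  · intro hl
    refine ⟨1/8, Real.exp (2 * 3 ^ l) * (K0 / (2 * K2) + 1), by norm_num, ?_, ?_, ?_⟩
    · have hq : 0 ≤ K0 / (2 * K2) := div_nonneg K0_nonneg (by linarith [K2_pos])
      have hE := Real.exp_pos (2 * 3 ^ l)
      nlinarith
    · intro γ hγ
      constructor
      · apply lam0_lower_of
        intro f h1 h2 h3 h4
        have hD := Dint_pos (l := l) (γ := γ) h1 h2 h3 h4
        have hN := lower_large (l := l) (γ := γ) hl (by linarith) h1 h2 h3 h4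
        rw [le_div_iff₀ hD]
        nlinarith [mul_nonneg (sq_nonneg γ) hD.le]
      · exact upper_large l γ hl hγ
    · intro γ hγ0 hγ1
      constructor
      · apply lam0_lower_of
        intro f h1 h2 h3 h4
        have hD := Dint_pos (l := l) (γ := γ) h1 h2 h3 h4
        have hsm := lower_small hl hγ0 hγ1 h1 h2 h3 h4
        rw [le_div_iff₀ hD]
        have hrp : 0 ≤ γ ^ (2/(l+1)) := Real.rpow_nonneg hγ0.le _
        nlinarith [mul_nonneg hrp hD.le]
      · exact upper_small l γ hl hγ0 hγ1
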